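/- Nonexistence of envy-free solutions under unbounded utilities (Appendix D): Consider the two-agent, two-room instance in which both agents have the same utilities, given by u 0 x := Real.exp (−x) + 2 for room 0 and u 1 x := −Real.exp x + 2 for room 1 (so v a r x = u r x for a ∈ Fin 2). Then for every permutation π of Fin 2 and every price vector p : Fin 2 → ℝ, the solution (π, p) is not envy-free; that is, this instance admits no envy-free solution, even though its utilities are continuous and strictly decreasing (they are unbounded). -/
import Mathlib


/-- Identical utilities of the two agents for the two rooms: room `0` has
utility `exp (-x) + 2`, room `1` has utility `-exp x + 2`. -/
noncomputable def u : Fin 2 → ℝ → ℝ :=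
  fun r x => if r = 0 then Real.exp (-x) + 2 else -Real.exp x + 2

/-- Nonexistence of envy-free solutions under unbounded utilities
(Appendix D): the two-agent instance `v a r x = u r x` admits no envy-free
solution. -/
theorem no_envy_free_unbounded :
    ∀ (π : Equiv.Perm (Fin 2)) (p : Fin 2 → ℝ),
      ¬ (∀ a r : Fin 2, u r (p r) ≤ u (π a) (p (π a))) := by
  intro π p h
  have h1 := h (π.symm 1) 0
  rw [Equiv.apply_symm_apply] at h1
  simp only [u, if_pos rfl] at h1
  norm_num at h1
  have e0 := Real.exp_pos (-(p 0))
  have e1 := Real.exp_pos (p 1)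
  linarith
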